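/- Assume the elliptic hypergeometric setting and assume hypothesis (A) or hypothesis (B). Then there is no complex constant v such that (v² − v)·A(z) + v·ν = (v − 1)·A(1/z) for all z outside some discrete subset of ℂ∖{0}. Equivalently, the Riccati equation v²·A(z) + v·(ν − A(z) − A(1/z)) + A(1/z) = 0 has no constant solution v ∈ ℂ. -/

import Mathlib

/-- The infinite `p`-Pochhammer product `(z;p)_∞ = ∏_{j ≥ 0} (1 - z pʲ)`. -/
noncomputable def poch (p z : ℂ) : ℂ := ∏' j : ℕ, (1 - z * p ^ j)

/-- The theta function `θ(z;p) = (z;p)_∞ (p z⁻¹;p)_∞`. -/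
noncomputable def theta (p z : ℂ) : ℂ := poch p z * poch p (p * z⁻¹)

/-- `S` is a discrete subset of `ℂ ∖ {0}`: it avoids `0` and each of its points is
isolated in `S`. -/
def DiscreteIn (S : Set ℂ) : Prop :=
  S ⊆ {z : ℂ | z ≠ 0} ∧ ∀ z ∈ S, ∃ ε > 0, ∀ w ∈ S, w ≠ z → ε ≤ dist w z

/-- The coefficient `A(z) = (∏_{j=1}^8 θ(εⱼ z;p)) / (θ(z²;p) θ(q z²;p))` of the
elliptic hypergeometric equation. -/
noncomputable def Afun (p q : ℂ) (ε : Fin 8 → ℂ) (z : ℂ) : ℂ :=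
  (∏ j, theta p (ε j * z)) / (theta p (z ^ 2) * theta p (q * z ^ 2))

/-- The constant `ν = ∏_{j=1}^6 θ(εⱼ ε₈ / q;p)`. -/
noncomputable def nuConst (p q : ℂ) (ε : Fin 8 → ℂ) : ℂ :=
  ∏ j : Fin 6, theta p (ε (Fin.castLE (by norm_num) j) * ε 7 / q)

/-- Hypothesis (A): every multiplicative relation among `ε₁, …, ε₈, p, q` is induced
by the balancing condition `∏ εⱼ = p² q²`. -/
def HypA (p q : ℂ) (ε : Fin 8 → ℂ) : Prop :=
  ∀ (α : Fin 8 → ℤ) (m n : ℤ), (∏ j, ε j ^ α j) = p ^ m * q ^ n →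
    ∃ a : ℤ, (∀ j, α j = a) ∧ m = 2 * a ∧ n = 2 * a

/-- Hypothesis (B): `ε₈ = q ε₇` and every multiplicative relation among
`ε₁, …, ε₈, p, q` is induced by the special balancing condition. -/
def HypB (p q : ℂ) (ε : Fin 8 → ℂ) : Prop :=
  ε 7 = q * ε 6 ∧
  ∀ (α : Fin 8 → ℤ) (m n : ℤ), (∏ j, ε j ^ α j) = p ^ m * q ^ n →
    ∃ a : ℤ, (∀ j : Fin 8, (j : ℕ) < 6 → α j = a) ∧ a = n - α 7 ∧
      α 6 + α 7 = 2 * a ∧ m = 2 * a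

/-- The derivation `(D g)(w) = w g'(w)`. -/
noncomputable def Dop (g : ℂ → ℂ) : ℂ → ℂ := fun w => w * deriv g w


section Lemmas


open Complex Filter Finset

lemma hasProd_zero_of_factor {f : ℕ → ℂ} (m : ℕ) (h : f m = 0) : HasProd f 0 := by
  have : ∀ᶠ s : Finset ℕ in atTop, (∏ i ∈ s, f i) = 0 := by
    filter_upwards [Filter.eventually_ge_atTop {m}] with s hs
    exact Finset.prod_eq_zero (hs (Finset.mem_singleton_self m)) h
  exact Filter.Tendsto.congr' (Filter.EventuallyEq.symm this) tendsto_const_nhds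

lemma summable_log_poch {p : ℂ} (hp : ‖p‖ < 1) (z : ℂ) :
    Summable fun j : ℕ => Complex.log (1 - z * p ^ j) := by
  have hto : Tendsto (fun j : ℕ => ‖z‖ * ‖p‖ ^ j) atTop (nhds 0) := by
    simpa using (tendsto_pow_atTop_nhds_zero_of_norm_lt_one (by simpa using hp)).const_mul ‖z‖
  have hev : ∀ᶠ j : ℕ in atTop, ‖Complex.log (1 - z * p ^ j)‖ ≤ (3/2) * (‖z‖ * ‖p‖ ^ j) := by
    filter_upwards [hto.eventually_le_const (by norm_num : (0:ℝ) < 1/2)] with j hj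
    have h1 : ‖-(z * p ^ j)‖ ≤ 1/2 := by
      simpa [norm_mul, norm_pow] using hj
    have := Complex.norm_log_one_add_half_le_self h1
    simp only [norm_neg, norm_mul, norm_pow] at this ⊢
    calc ‖Complex.log (1 - z * p ^ j)‖ = ‖Complex.log (1 + -(z * p ^ j))‖ := by ring_nf
      _ ≤ 3/2 * ‖z * p^j‖ := by simpa using this
      _ ≤ 3/2 * (‖z‖ * ‖p‖^j) := by rw [norm_mul, norm_pow]
  refine Summable.of_norm_bounded_eventually ?_ (by rw [Nat.cofinite_eq_atTop]; exact hev)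
  exact ((summable_geometric_of_lt_one (norm_nonneg p) hp).mul_left ‖z‖).mul_left (3/2)

lemma poch_ne_zero {p : ℂ} (hp : ‖p‖ < 1) {z : ℂ} (h : ∀ j : ℕ, z * p ^ j ≠ 1) :
    poch p z ≠ 0 := by
  have hfn : ∀ j : ℕ, (1 : ℂ) - z * p ^ j ≠ 0 := by
    intro j hj
    exact h j (by linear_combination -hj)
  have hprod : HasProd (fun j : ℕ => 1 - z * p ^ j)
      (Complex.exp (∑' j : ℕ, Complex.log (1 - z * p ^ j))) := by
    refine HasProd.congr_fun ((summable_log_poch hp z).hasSum.cexp) (fun j => ?_)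
    exact (Complex.exp_log (hfn j)).symm
  rw [poch, hprod.tprod_eq]
  exact Complex.exp_ne_zero _

lemma poch_eq_zero_iff {p : ℂ} (hp : ‖p‖ < 1) {z : ℂ} :
    poch p z = 0 ↔ ∃ j : ℕ, z * p ^ j = 1 := by
  constructor
  · intro h
    by_contra hc
    push_neg at hc
    exact poch_ne_zero hp hc h
  · rintro ⟨j, hj⟩
    rw [poch, (hasProd_zero_of_factor j (by rw [hj]; ring)).tprod_eq]

set_option maxHeartbeats 1000000 in
lemma continuous_poch {p : ℂ} (hp : ‖p‖ < 1) : Continuous (fun z => poch p z) := by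
  rw [continuous_iff_continuousAt]
  intro z₀
  have hR : (0:ℝ) < ‖z₀‖ + 1 := by positivity
  set R : ℝ := ‖z₀‖ + 1 with hRdef
  obtain ⟨K, hK⟩ : ∃ K : ℕ, ‖p‖ ^ K * R ≤ 1/2 := by
    have h2 : Tendsto (fun K : ℕ => ‖p‖ ^ K * R) atTop (nhds (0 * R)) :=
      (tendsto_pow_atTop_nhds_zero_of_lt_one (norm_nonneg p) hp).mul_const R
    rw [zero_mul] at h2
    exact (h2.eventually_le_const (by norm_num : (0:ℝ) < 1/2)).exists
  set s := Metric.ball z₀ 1 with hsdef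
  have hzR : ∀ z ∈ s, ‖z‖ < R := by
    intro z hz
    have : dist z z₀ < 1 := Metric.mem_ball.mp hz
    calc ‖z‖ ≤ ‖z₀‖ + ‖z - z₀‖ := by
            simpa using norm_add_le z₀ (z - z₀)
      _ < ‖z₀‖ + 1 := by rw [← dist_eq_norm] at *; linarith
  have hsmall : ∀ z ∈ s, ∀ j : ℕ, ‖z * p ^ (j + K)‖ ≤ 1/2 := by
    intro z hz j
    have h1 : ‖p‖ ^ (j + K) ≤ ‖p‖ ^ K :=
      pow_le_pow_of_le_one (norm_nonneg p) hp.le (Nat.le_add_left K j)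
    calc ‖z * p ^ (j + K)‖ = ‖z‖ * ‖p‖ ^ (j + K) := by rw [norm_mul, norm_pow]
      _ ≤ R * ‖p‖ ^ K := by
          apply mul_le_mul (hzR z hz).le h1 (by positivity) hR.le
      _ ≤ 1/2 := by rw [mul_comm]; exact hK
  have hfac : ∀ z ∈ s, ∀ j : ℕ, (1 : ℂ) - z * p ^ (j + K) ≠ 0 := by
    intro z hz j h
    have h1 : z * p ^ (j + K) = 1 := by linear_combination -h
    have h2 := hsmall z hz j
    rw [h1, norm_one] at h2
    linarith
  have hslit : ∀ z ∈ s, ∀ j : ℕ, (1 : ℂ) - z * p ^ (j + K) ∈ Complex.slitPlane := by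
    intro z hz j
    left
    have h1 : (z * p ^ (j + K)).re ≤ ‖z * p ^ (j + K)‖ := by
      simpa using Complex.re_le_norm (z * p ^ (j + K))
    have h2 := hsmall z hz j
    simp only [Complex.sub_re, Complex.one_re]
    linarith
  have htail : ∀ z ∈ s, poch p z =
      (∏ i ∈ range K, (1 - z * p ^ i)) *
        Complex.exp (∑' j : ℕ, Complex.log (1 - z * p ^ (j + K))) := by
    intro z hz
    have hsum : Summable fun j : ℕ => Complex.log (1 - z * p ^ (j + K)) :=
      (summable_nat_add_iff K).mpr (summable_log_poch hp z)
    have hprod : HasProd (fun j : ℕ => 1 - z * p ^ (j + K))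
        (Complex.exp (∑' j : ℕ, Complex.log (1 - z * p ^ (j + K)))) := by
      refine HasProd.congr_fun (hsum.hasSum.cexp) (fun j => ?_)
      exact (Complex.exp_log (hfac z hz j)).symm
    rw [poch, ← Multipliable.prod_mul_tprod_nat_mul' (f := fun j : ℕ => (1 : ℂ) - z * p ^ j)
      (k := K) hprod.multipliable, hprod.tprod_eq]
  have hulim : TendstoUniformlyOn
      (fun (N : ℕ) (z : ℂ) => ∑ j ∈ range N, Complex.log (1 - z * p ^ (j + K)))
      (fun z => ∑' j : ℕ, Complex.log (1 - z * p ^ (j + K))) atTop s := by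
    apply tendstoUniformlyOn_tsum_nat (u := fun j : ℕ => 3/2 * (R * ‖p‖ ^ (j + K)))
    · apply Summable.mul_left
      apply Summable.mul_left
      exact ((summable_geometric_of_lt_one (norm_nonneg p) hp).comp_injective
        (add_left_injective K))
    · intro j z hz
      have h1 := hsmall z hz j
      have := Complex.norm_log_one_add_half_le_self (z := -(z * p ^ (j + K)))
        (by simpa using h1)
      have heq : (1 : ℂ) + -(z * p ^ (j + K)) = 1 - z * p ^ (j + K) := by ring
      rw [heq] at this
      calc ‖Complex.log (1 - z * p ^ (j + K))‖ ≤ 3/2 * ‖-(z * p ^ (j + K))‖ := this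
        _ = 3/2 * (‖z‖ * ‖p‖ ^ (j + K)) := by rw [norm_neg, norm_mul, norm_pow]
        _ ≤ 3/2 * (R * ‖p‖ ^ (j + K)) := by
            have := (hzR z hz).le
            gcongr
  have hcont_sum : ContinuousOn
      (fun z => ∑' j : ℕ, Complex.log (1 - z * p ^ (j + K))) s := by
    apply hulim.continuousOn
    refine Filter.Eventually.frequently ?_
    filter_upwards with N
    apply continuousOn_finset_sum
    intro j _
    apply ContinuousOn.clog
    · exact ((continuous_const.sub ((continuous_id.mul continuous_const)))).continuousOn
    · intro z hz
      exact hslit z hz j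
  have hcont : ContinuousOn (fun z => (∏ i ∈ range K, (1 - z * p ^ i)) *
      Complex.exp (∑' j : ℕ, Complex.log (1 - z * p ^ (j + K)))) s := by
    apply ContinuousOn.mul
    · apply Continuous.continuousOn
      exact continuous_finset_prod _ fun i _ => continuous_const.sub (continuous_id.mul continuous_const)
    · exact Complex.continuous_exp.comp_continuousOn hcont_sum
  have hmem : s ∈ nhds z₀ := Metric.ball_mem_nhds z₀ one_pos
  have : ContinuousAt (fun z => (∏ i ∈ range K, (1 - z * p ^ i)) *
      Complex.exp (∑' j : ℕ, Complex.log (1 - z * p ^ (j + K)))) z₀ :=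
    hcont.continuousAt hmem
  apply this.congr
  filter_upwards [hmem] with z hz
  exact (htail z hz).symm


lemma theta_eq_zero_iff {p : ℂ} (hp : ‖p‖ < 1) (hp0 : p ≠ 0) (x : ℂ) :
    theta p x = 0 ↔ ∃ k : ℤ, x = p ^ k := by
  rw [theta, mul_eq_zero, poch_eq_zero_iff hp, poch_eq_zero_iff hp]
  constructor
  · rintro (⟨j, hj⟩ | ⟨j, hj⟩)
    · refine ⟨-(j : ℤ), ?_⟩
      have hpj : (p : ℂ) ^ j ≠ 0 := pow_ne_zero j hp0
      rw [zpow_neg, zpow_natCast]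
      field_simp
      linear_combination hj
    · refine ⟨(j : ℤ) + 1, ?_⟩
      have hx : x ≠ 0 := by
        rintro rfl
        simp at hj
      have hxi : p * x⁻¹ * p ^ j = p ^ (j + 1) * x⁻¹ := by ring
      rw [hxi] at hj
      have : x⁻¹ = (p ^ (j + 1))⁻¹ := by
        field_simp at hj ⊢
        linear_combination hj
      have hx2 : x = p ^ (j + 1) := by
        rw [← inv_inv x, this, inv_inv]
      rw [hx2, ← zpow_natCast]
      push_cast
      ring_nf
  · rintro ⟨k, rfl⟩
    rcases le_or_gt k 0 with hk | hk
    · left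
      refine ⟨(-k).toNat, ?_⟩
      rw [← zpow_natCast p, Int.toNat_of_nonneg (by omega), ← zpow_add₀ hp0]
      simp
    · right
      refine ⟨(k - 1).toNat, ?_⟩
      have h1 : p * ((p:ℂ) ^ k)⁻¹ * p ^ ((k-1) : ℤ) = p ^ ((1 : ℤ) + -k + (k-1)) := by
        rw [zpow_add₀ hp0, zpow_add₀ hp0, zpow_neg, zpow_one]
      rw [← zpow_natCast p ((k-1).toNat), Int.toNat_of_nonneg (by omega), h1]
      have h2 : (1 : ℤ) + -k + (k - 1) = 0 := by ring
      rw [h2, zpow_zero]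



open Complex Filter Finset

lemma discreteIn_countable {S : Set ℂ} (h : DiscreteIn S) : S.Countable := by
  obtain ⟨-, h2⟩ := h
  choose! r hr hsep using h2
  have hdisj : S.PairwiseDisjoint (fun z => Metric.ball z (r z / 2)) := by
    intro a ha b hb hab
    have h1 : r a ≤ dist b a := hsep a ha b hb hab.symm
    have h2 : r b ≤ dist a b := hsep b hb a ha hab
    apply Metric.ball_disjoint_ball
    rw [dist_comm] at h1
    linarith
  exact hdisj.countable_of_isOpen (fun i _ => Metric.isOpen_ball)
    (fun i hi => ⟨i, by simpa using half_pos (hr i hi)⟩)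

lemma countable_sq_eq (c : ℂ) : {z : ℂ | z ^ 2 = c}.Countable := by
  obtain ⟨w, hw⟩ := IsAlgClosed.exists_pow_nat_eq c (n := 2) (by norm_num)
  apply Set.Countable.mono ?_ (Set.Finite.countable (Set.toFinite ({w, -w} : Set ℂ)))
  intro z hz
  simp only [Set.mem_setOf_eq] at hz
  have : z ^ 2 = w ^ 2 := by rw [hz, hw]
  rcases sq_eq_sq_iff_eq_or_eq_neg.mp this with h | h
  · exact Set.mem_insert_iff.mpr (Or.inl h)
  · exact Set.mem_insert_iff.mpr (Or.inr (by simpa using h))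

section Rel

variable {p q : ℂ} {ε : Fin 8 → ℂ}

lemma no_rel_sq (hε : ∀ i, ε i ≠ 0) (hAB : HypA p q ε ∨ HypB p q ε) (j : Fin 8) (k : ℤ) :
    (ε j) ^ (2 : ℤ) ≠ p ^ k * q := by
  intro hrel
  set α : Fin 8 → ℤ := fun i => if i = j then 2 else 0 with hα
  have hprod : (∏ i, ε i ^ α i) = p ^ k * q ^ (1 : ℤ) := by
    rw [Finset.prod_eq_single j (fun i _ hij => by simp [hα, hij]) (fun h => absurd (Finset.mem_univ _) h)]
    simp only [hα, if_pos rfl]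
    rw [zpow_one]
    exact hrel
  rcases hAB with hA | ⟨-, hB⟩
  · obtain ⟨a, -, -, hn⟩ := hA α k 1 hprod
    omega
  · obtain ⟨a, h6, ha, hsum, -⟩ := hB α k 1 hprod
    have hαj : α j = 2 := by simp [hα]
    have hα7 : α 7 = if (7 : Fin 8) = j then 2 else 0 := rfl
    have hα6 : α 6 = if (6 : Fin 8) = j then 2 else 0 := rfl
    have hα0 : α 0 = if (0 : Fin 8) = j then 2 else 0 := rfl
    rcases lt_or_ge (j : ℕ) 6 with hj | hj
    · have h1 : α j = a := h6 j hj
      have h3 : α 7 = 0 := by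
        rw [hα7, if_neg]
        intro he
        rw [← he] at hj
        exact absurd hj (by decide)
      omega
    · have h00 : (0 : Fin 8) ≠ j := by
        intro he
        rw [← he] at hj
        exact absurd hj (by decide)
      have h0 : a = 0 := by
        have := h6 0 (by norm_num)
        rw [hα0, if_neg h00] at this
        omega
      have hj8 : (j : ℕ) < 8 := j.isLt
      rcases Nat.eq_or_lt_of_le hj with h6' | h7'
      · -- (j : ℕ) = 6
        have hj6 : j = 6 := by exact Fin.ext (by omega)
        have e7 : α 7 = 0 := by rw [hα7, if_neg (by rw [hj6]; decide)]
        have e6 : α 6 = 2 := by rw [hα6, if_pos (by rw [hj6])]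
        omega
      · -- (j : ℕ) = 7
        have hj7 : j = 7 := by exact Fin.ext (by omega)
        have e7 : α 7 = 2 := by rw [hα7, if_pos (by rw [hj7])]
        omega

lemma no_rel_nu (hε : ∀ i, ε i ≠ 0) (hAB : HypA p q ε ∨ HypB p q ε) (j : Fin 6) (k : ℤ) :
    ε (Fin.castLE (by norm_num) j) * ε 7 ≠ p ^ k * q := by
  intro hrel
  set j' : Fin 8 := Fin.castLE (by norm_num) j with hj'
  have hj'6 : (j' : ℕ) < 6 := j.isLt
  have hj'7 : j' ≠ 7 := by
    intro he
    rw [he] at hj'6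
    exact absurd hj'6 (by decide)
  set α : Fin 8 → ℤ := fun i => (if i = j' then 1 else 0) + (if i = 7 then 1 else 0) with hα
  have hprod : (∏ i, ε i ^ α i) = p ^ k * q ^ (1 : ℤ) := by
    have hsplit : (∏ i, ε i ^ α i) =
        (∏ i, ε i ^ (if i = j' then (1:ℤ) else 0)) * (∏ i, ε i ^ (if i = 7 then (1:ℤ) else 0)) := by
      rw [← Finset.prod_mul_distrib]
      refine Finset.prod_congr rfl fun i _ => ?_
      rw [hα, zpow_add₀ (hε i)]
    rw [hsplit,
      Finset.prod_eq_single j' (fun i _ hij => by simp [hij]) (fun h => absurd (Finset.mem_univ _) h),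
      Finset.prod_eq_single (7 : Fin 8) (fun i _ hij => by simp [hij]) (fun h => absurd (Finset.mem_univ _) h)]
    simpa using hrel
  rcases hAB with hA | ⟨-, hB⟩
  · obtain ⟨a, -, -, hn⟩ := hA α k 1 hprod
    omega
  · obtain ⟨a, h6, ha, -, -⟩ := hB α k 1 hprod
    have h1 : α j' = a := h6 j' hj'6
    have h2 : α j' = 1 := by simp [hα, hj'7]
    have h3 : α 7 = 1 := by simp [hα, Ne.symm hj'7]
    omega

end Rel

end Lemmas

open Complex Filter Finset in
set_option maxHeartbeats 2000000 in
/-- Under hypothesis (A) or (B), the equation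
`(v² - v) A(z) + v ν = (v - 1) A(1/z)` has no constant solution `v ∈ ℂ` holding off a
discrete subset of `ℂ ∖ {0}`; equivalently, the Riccati equation
`v² A(z) + v (ν - A(z) - A(1/z)) + A(1/z) = 0` has no constant solution. -/
theorem elliptic_hypergeometric_no_constant_riccati_solution
    (p q : ℂ) (ε : Fin 8 → ℂ)
    (hp0 : p ≠ 0) (hp1 : ‖p‖ < 1)
    (hq0 : q ≠ 0) (hq1 : ‖q‖ < 1)
    (hpq : ∀ m n : ℤ, p ^ m = q ^ n → m = 0 ∧ n = 0)
    (hε : ∀ j, ε j ≠ 0)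
    (hbal : (∏ j, ε j) = p ^ 2 * q ^ 2)
    (hAB : HypA p q ε ∨ HypB p q ε) :
    (¬ ∃ v : ℂ, ∃ S : Set ℂ, DiscreteIn S ∧ ∀ z : ℂ, z ≠ 0 → z ∉ S →
      (v ^ 2 - v) * Afun p q ε z + v * nuConst p q ε = (v - 1) * Afun p q ε z⁻¹) ∧
    (¬ ∃ v : ℂ, ∃ S : Set ℂ, DiscreteIn S ∧ ∀ z : ℂ, z ≠ 0 → z ∉ S →
      v ^ 2 * Afun p q ε z + v * (nuConst p q ε - Afun p q ε z - Afun p q ε z⁻¹)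
        + Afun p q ε z⁻¹ = 0) := by
  classical
  have hp' : ‖p‖ < 1 := by simpa using hp1
  have hθ : ∀ x : ℂ, theta p x = 0 ↔ ∃ k : ℤ, x = p ^ k := theta_eq_zero_iff hp' hp0
  set N : ℂ → ℂ := fun z => ∏ j, theta p (ε j * z) with hNdef
  set D : ℂ → ℂ := fun z => theta p (z ^ 2) * theta p (q * z ^ 2) with hDdef
  have hAfun : ∀ z, Afun p q ε z = N z / D z := fun z => rfl
  have key : ¬ ∃ v : ℂ, ∃ S : Set ℂ, DiscreteIn S ∧ ∀ z : ℂ, z ≠ 0 → z ∉ S →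
      (v ^ 2 - v) * Afun p q ε z + v * nuConst p q ε = (v - 1) * Afun p q ε z⁻¹ := by
    rintro ⟨v, S, ⟨hS0, hSd⟩, heq⟩
    -- ν ≠ 0
    have hν : nuConst p q ε ≠ 0 := by
      rw [nuConst, Finset.prod_ne_zero_iff]
      intro j _ h0
      obtain ⟨k, hk⟩ := (hθ _).mp h0
      apply no_rel_nu hε hAB j k
      rw [div_eq_iff hq0] at hk
      linear_combination hk
    -- countability facts
    have hScnt : S.Countable := discreteIn_countable ⟨hS0, hSd⟩
    have hNcnt : {z : ℂ | N z = 0}.Countable := by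
      apply Set.Countable.mono ?_ (Set.countable_iUnion fun j : Fin 8 =>
        (Set.countable_iUnion fun k : ℤ => Set.countable_singleton ((p ^ k) / ε j)))
      intro z hz
      simp only [Set.mem_setOf_eq, hNdef] at hz
      rw [Finset.prod_eq_zero_iff] at hz
      obtain ⟨j, -, hj⟩ := hz
      obtain ⟨k, hk⟩ := (hθ _).mp hj
      refine Set.mem_iUnion.mpr ⟨j, Set.mem_iUnion.mpr ⟨k, ?_⟩⟩
      simp only [Set.mem_singleton_iff]
      rw [eq_div_iff (hε j)]
      linear_combination hk
    have hDcnt : {z : ℂ | D z = 0}.Countable := by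
      apply Set.Countable.mono ?_ (Set.countable_iUnion fun k : ℤ =>
        ((countable_sq_eq ((p:ℂ) ^ k)).union (countable_sq_eq ((p:ℂ) ^ k / q))))
      intro z hz
      simp only [Set.mem_setOf_eq, hDdef] at hz
      rcases mul_eq_zero.mp hz with h | h
      · obtain ⟨k, hk⟩ := (hθ _).mp h
        exact Set.mem_iUnion.mpr ⟨k, Set.mem_union_left _ hk⟩
      · obtain ⟨k, hk⟩ := (hθ _).mp h
        refine Set.mem_iUnion.mpr ⟨k, Set.mem_union_right _ ?_⟩
        show z ^ 2 = (p:ℂ) ^ k / q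
        rw [eq_div_iff hq0]
        linear_combination hk
    -- the special point z₀ with z₀² = q⁻¹
    obtain ⟨z₀, hz₀⟩ := IsAlgClosed.exists_pow_nat_eq (k := ℂ) q⁻¹ (n := 2) (by norm_num)
    have hz₀0 : z₀ ≠ 0 := by
      intro h
      rw [h] at hz₀
      exact inv_ne_zero hq0 (by simpa using hz₀.symm)
    have hNz₀ : N z₀ ≠ 0 := by
      rw [hNdef]
      rw [Finset.prod_ne_zero_iff]
      intro j _ h0
      obtain ⟨k, hk⟩ := (hθ _).mp h0
      apply no_rel_sq hε hAB j (2 * k)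
      have h1 : (ε j) ^ 2 * q⁻¹ = ((p:ℂ) ^ k) ^ 2 := by
        rw [← hz₀, ← hk]
        ring
      have h2 : ((p:ℂ) ^ k) ^ 2 = (p:ℂ) ^ (2 * k) := by
        rw [mul_comm (2:ℤ) k, zpow_mul, zpow_two]
        ring
      rw [zpow_two]
      have := h1
      rw [h2] at this
      field_simp at this
      linear_combination this
    have hDz₀ : D z₀ = 0 := by
      have h1 : q * z₀ ^ 2 = 1 := by
        rw [hz₀]
        field_simp
      have h2 : theta p (q * z₀ ^ 2) = 0 := by
        rw [h1]
        exact (hθ 1).mpr ⟨0, by simp⟩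
      rw [hDdef]
      simp only [h2, mul_zero]
    have hz₀inv : (z₀⁻¹) ^ 2 = q := by
      rw [inv_pow, hz₀, inv_inv]
    have hDz₀inv : D z₀⁻¹ ≠ 0 := by
      rw [hDdef]
      simp only [hz₀inv]
      apply mul_ne_zero
      · intro h0
        obtain ⟨k, hk⟩ := (hθ _).mp h0
        have := hpq k 1 (by rw [zpow_one]; exact hk.symm)
        omega
      · intro h0
        obtain ⟨k, hk⟩ := (hθ _).mp h0
        have := hpq k 2 (by rw [zpow_two]; exact hk.symm)
        omega
    -- continuity facts
    have hpoch : Continuous (fun z => poch p z) := continuous_poch hp'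
    have hθca : ∀ x : ℂ, x ≠ 0 → ContinuousAt (theta p) x := by
      intro x hx
      have : theta p = fun y => poch p y * poch p (p * y⁻¹) := rfl
      rw [this]
      exact (hpoch.continuousAt).mul
        ((hpoch.continuousAt).comp (continuousAt_const.mul (continuousAt_inv₀ hx)))
    have hNca : ∀ x : ℂ, x ≠ 0 → ContinuousAt N x := by
      intro x hx
      apply tendsto_finset_prod
      intro j _
      exact Filter.Tendsto.comp (hθca (ε j * x) (mul_ne_zero (hε j) hx))
        (Continuous.continuousAt (x := x) (continuous_const.mul continuous_id))
    have hDca : ∀ x : ℂ, x ≠ 0 → ContinuousAt D x := by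
      intro x hx
      have c1 : ContinuousAt (fun z : ℂ => theta p (z ^ 2)) x :=
        Filter.Tendsto.comp (hθca (x ^ 2) (pow_ne_zero 2 hx))
          (Continuous.continuousAt (x := x) (continuous_pow 2))
      have c2 : ContinuousAt (fun z : ℂ => theta p (q * z ^ 2)) x :=
        Filter.Tendsto.comp (hθca (q * x ^ 2) (mul_ne_zero hq0 (pow_ne_zero 2 hx)))
          (Continuous.continuousAt (x := x) (continuous_const.mul (continuous_pow 2)))
      exact c1.mul c2
    -- case v = 0
    rcases eq_or_ne v 0 with rfl | hv0
    · have hbadc : (S ∪ ({0} : Set ℂ) ∪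
          (fun z : ℂ => z⁻¹) '' ({z : ℂ | N z = 0} ∪ {z : ℂ | D z = 0})).Countable :=
        ((hScnt.union (Set.countable_singleton 0)).union
          ((hNcnt.union hDcnt).image _))
      obtain ⟨z, hz⟩ := (hbadc.dense_compl ℂ).nonempty
      simp only [Set.mem_compl_iff, Set.mem_union, not_or] at hz
      obtain ⟨⟨hzS, hz0⟩, hzim⟩ := hz
      have hz0' : z ≠ 0 := by simpa using hz0
      have hE := heq z hz0' hzS
      have hA0 : Afun p q ε z⁻¹ = 0 := by linear_combination hE
      have hNz : N z⁻¹ ≠ 0 := by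
        intro h
        exact hzim ⟨z⁻¹, Or.inl h, inv_inv z⟩
      have hDz : D z⁻¹ ≠ 0 := by
        intro h
        exact hzim ⟨z⁻¹, Or.inr h, inv_inv z⟩
      rw [hAfun] at hA0
      exact (div_ne_zero hNz hDz) hA0
    -- case v = 1
    rcases eq_or_ne v 1 with rfl | hv1
    · have hbadc : (S ∪ ({0} : Set ℂ)).Countable := hScnt.union (Set.countable_singleton 0)
      obtain ⟨z, hz⟩ := (hbadc.dense_compl ℂ).nonempty
      simp only [Set.mem_compl_iff, Set.mem_union, not_or] at hz
      obtain ⟨hzS, hz0⟩ := hz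
      have hz0' : z ≠ 0 := by simpa using hz0
      have hE := heq z hz0' hzS
      exact hν (by linear_combination hE)
    -- general case : v ≠ 0, v ≠ 1
    have hv2 : v ^ 2 - v ≠ 0 := by
      have : v ^ 2 - v = v * (v - 1) := by ring
      rw [this]
      exact mul_ne_zero hv0 (sub_ne_zero.mpr hv1)
    set G : Set ℂ := (S ∪ ({0} : Set ℂ) ∪ {z : ℂ | D z = 0})ᶜ with hGdef
    have hGdense : Dense G :=
      ((hScnt.union (Set.countable_singleton 0)).union hDcnt).dense_compl ℂ
    have hne : (nhdsWithin z₀ G).NeBot :=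
      mem_closure_iff_nhdsWithin_neBot.mp (hGdense z₀)
    have hNt : Tendsto N (nhdsWithin z₀ G) (nhds (N z₀)) :=
      ((hNca z₀ hz₀0).tendsto).mono_left nhdsWithin_le_nhds
    have hDt : Tendsto D (nhdsWithin z₀ G) (nhds 0) := by
      have := ((hDca z₀ hz₀0).tendsto).mono_left
        (nhdsWithin_le_nhds (s := G))
      rwa [hDz₀] at this
    have hAt : Tendsto (fun z => Afun p q ε z⁻¹) (nhdsWithin z₀ G)
        (nhds (Afun p q ε z₀⁻¹)) := by
      have t1 : Tendsto (fun z : ℂ => N z⁻¹) (nhds z₀) (nhds (N z₀⁻¹)) :=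
        Filter.Tendsto.comp (g := N) (f := fun z : ℂ => z⁻¹)
          (hNca z₀⁻¹ (inv_ne_zero hz₀0)) (continuousAt_inv₀ hz₀0)
      have t2 : Tendsto (fun z : ℂ => D z⁻¹) (nhds z₀) (nhds (D z₀⁻¹)) :=
        Filter.Tendsto.comp (g := D) (f := fun z : ℂ => z⁻¹)
          (hDca z₀⁻¹ (inv_ne_zero hz₀0)) (continuousAt_inv₀ hz₀0)
      have t3 : Tendsto (fun z : ℂ => N z⁻¹ / D z⁻¹) (nhds z₀) (nhds (N z₀⁻¹ / D z₀⁻¹)) :=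
        t1.div t2 hDz₀inv
      rw [show Afun p q ε z₀⁻¹ = N z₀⁻¹ / D z₀⁻¹ from hAfun z₀⁻¹]
      have t4 := t3.mono_left (nhdsWithin_le_nhds (s := G))
      exact t4.congr (fun z => (hAfun z⁻¹).symm)
    have hEv : N =ᶠ[nhdsWithin z₀ G] fun z =>
        ((v - 1) * Afun p q ε z⁻¹ - v * nuConst p q ε) / (v ^ 2 - v) * D z := by
      apply eventually_nhdsWithin_of_forall
      intro z hzG
      rw [hGdef] at hzG
      simp only [Set.mem_compl_iff, Set.mem_union, not_or, Set.mem_setOf_eq,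
        Set.mem_singleton_iff] at hzG
      obtain ⟨⟨hzS, hz0⟩, hzD⟩ := hzG
      have hE := heq z hz0 hzS
      rw [hAfun z] at hE
      have hAz : N z / D z = ((v - 1) * Afun p q ε z⁻¹ - v * nuConst p q ε) / (v ^ 2 - v) := by
        rw [eq_div_iff hv2]
        linear_combination hE
      calc N z = N z / D z * D z := by rw [div_mul_cancel₀ _ hzD]
        _ = ((v - 1) * Afun p q ε z⁻¹ - v * nuConst p q ε) / (v ^ 2 - v) * D z := by
            rw [hAz]
    have hlim : Tendsto (fun z => ((v - 1) * Afun p q ε z⁻¹ - v * nuConst p q ε)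
        / (v ^ 2 - v) * D z) (nhdsWithin z₀ G) (nhds 0) := by
      have h5 := (((hAt.const_mul (v - 1)).sub (tendsto_const_nhds (x := v * nuConst p q ε))).div_const (v ^ 2 - v)).mul hDt
      simpa using h5
    have : N z₀ = 0 :=
      tendsto_nhds_unique hNt (hlim.congr' hEv.symm)
    exact hNz₀ this
  refine ⟨key, ?_⟩
  rintro ⟨v, S, hS, h⟩
  exact key ⟨v, S, hS, fun z hz hz' => by linear_combination h z hz hz'⟩
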